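/- Let c = (a,b) ∈ ℝ² and r > 0, and let x, y ∈ ℝ². If ψ(x) lies strictly below the plane ρ(c,r) and ψ(y) lies strictly above ρ(c,r), then the segment [x,y] intersects the circle C(c,r) in exactly one point. -/

import Mathlib

open Set

lemma seg_sphere_unique {E : Type*} [NormedAddCommGroup E] [NormedSpace ℝ E]
    {c x y p q : E} {r : ℝ}
    (hx : dist x c < r)
    (hp : p ∈ segment ℝ x y) (hps : dist p c = r)
    (hq : q ∈ segment ℝ x y) (hqs : dist q c = r) : p = q := by
  rw [segment_eq_image'] at hp hq
  obtain ⟨t, ht, rfl⟩ := hp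
  obtain ⟨s, hs, rfl⟩ := hq
  have key : ∀ u v : ℝ, u ∈ Icc (0:ℝ) 1 → v ∈ Icc (0:ℝ) 1 → u < v →
      dist (x + v • (y - x)) c = r → dist (x + u • (y - x)) c = r → False := by
    intro u v hu hv huv hvd hud
    have hv0 : 0 < v := lt_of_le_of_lt hu.1 huv
    set lam := u / v with hlam
    have hl0 : 0 ≤ lam := div_nonneg hu.1 hv0.le
    have hl1 : lam < 1 := (div_lt_one hv0).mpr huv
    have hlv : u = lam * v := by rw [hlam, div_mul_cancel₀ u hv0.ne']
    have hcomb : x + u • (y - x) - c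
        = (1 - lam) • (x - c) + lam • (x + v • (y - x) - c) := by
      rw [hlv]; module
    have hcalc : r < r := by
      calc r = dist (x + u • (y - x)) c := hud.symm
        _ = ‖(1 - lam) • (x - c) + lam • (x + v • (y - x) - c)‖ := by
            rw [dist_eq_norm, hcomb]
        _ ≤ (1 - lam) * ‖x - c‖ + lam * ‖x + v • (y - x) - c‖ := by
            refine (norm_add_le _ _).trans ?_
            rw [norm_smul, norm_smul, Real.norm_eq_abs, Real.norm_eq_abs,
              abs_of_nonneg (by linarith), abs_of_nonneg hl0]
        _ < (1 - lam) * r + lam * r := by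
            have h1 : ‖x - c‖ < r := by rwa [dist_eq_norm] at hx
            have h2 : ‖x + v • (y - x) - c‖ = r := by rwa [dist_eq_norm] at hvd
            nlinarith
        _ = r := by ring
    exact lt_irrefl r hcalc
  rcases lt_trichotomy t s with h | h | h
  · exact (key t s ht hs h hqs hps).elim
  · rw [h]
  · exact (key s t hs ht h hps hqs).elim

/-- if ψ(x) lies strictly below the plane ρ(c,r) and ψ(y) strictly above it,
then the segment [x,y] intersects the circle C(c,r) in exactly one point. -/
theorem lift_separated_segment_circle_unique_inter
    (c x y : EuclideanSpace ℝ (Fin 2)) (r : ℝ) (hr : 0 < r)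
    (hx : (x 0) ^ 2 + (x 1) ^ 2 <
        2 * c 0 * x 0 + 2 * c 1 * x 1 - (c 0) ^ 2 - (c 1) ^ 2 + r ^ 2)
    (hy : (y 0) ^ 2 + (y 1) ^ 2 >
        2 * c 0 * y 0 + 2 * c 1 * y 1 - (c 0) ^ 2 - (c 1) ^ 2 + r ^ 2) :
    ∃ p : EuclideanSpace ℝ (Fin 2),
      segment ℝ x y ∩ Metric.sphere c r = {p} := by
  have hx' : dist x c < r := by
    rw [EuclideanSpace.dist_eq, Fin.sum_univ_two, Real.sqrt_lt' hr]
    simp only [Real.dist_eq, sq_abs]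
    nlinarith
  have hy' : r < dist y c := by
    rw [EuclideanSpace.dist_eq, Fin.sum_univ_two,
      show r = Real.sqrt (r ^ 2) by rw [Real.sqrt_sq hr.le]]
    apply Real.sqrt_lt_sqrt (by positivity)
    simp only [Real.dist_eq, sq_abs]
    nlinarith
  have hcont : Continuous (fun t : ℝ => dist (x + t • (y - x)) c) := by fun_prop
  have hiv := intermediate_value_Icc (by norm_num : (0:ℝ) ≤ 1) hcont.continuousOn
  have hrmem : r ∈ Icc (dist (x + (0:ℝ) • (y - x)) c) (dist (x + (1:ℝ) • (y - x)) c) := by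
    simp only [zero_smul, one_smul, add_zero]
    refine ⟨by linarith, ?_⟩
    have hxy : x + (y - x) = y := by abel
    rw [hxy]; exact hy'.le
  obtain ⟨t, ht, hts⟩ := hiv hrmem
  refine ⟨x + t • (y - x), ?_⟩
  ext z
  simp only [mem_inter_iff, mem_singleton_iff, Metric.mem_sphere]
  constructor
  · rintro ⟨hz1, hz2⟩
    exact seg_sphere_unique hx' hz1 hz2
      (by rw [segment_eq_image']; exact ⟨t, ht, rfl⟩) hts
  · rintro rfl
    exact ⟨by rw [segment_eq_image']; exact ⟨t, ht, rfl⟩, hts⟩
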